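/- Let U be a random variable with 0 ≤ U ≤ 1 almost surely, and set β_j = E[U^j] for j = 1, 2, 3. Then β₂² − β₁β₃ + β₁β₂ − β₁³ = (β₂ − β₁²)² + β₁ · E[(U − β₁)²(1 − U)], and consequently β₂² − β₁β₃ + β₁β₂ − β₁³ ≥ 0. -/

import Mathlib

open MeasureTheory

/-- For a random variable `U ∈ [0,1]` a.s. with moments `β_j = E[U^j]`,
`β₂² - β₁β₃ + β₁β₂ - β₁³ = (β₂ - β₁²)² + β₁ E[(U - β₁)²(1 - U)] ≥ 0`. -/
theorem stmt_10 {Ω : Type*} [MeasurableSpace Ω] (P : Measure Ω) [IsProbabilityMeasure P]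
    (U : Ω → ℝ) (hU : Measurable U) (hb : ∀ᵐ ω ∂P, U ω ∈ Set.Icc (0 : ℝ) 1)
    (β₁ β₂ β₃ : ℝ)
    (h1 : β₁ = ∫ ω, U ω ∂P) (h2 : β₂ = ∫ ω, (U ω) ^ 2 ∂P)
    (h3 : β₃ = ∫ ω, (U ω) ^ 3 ∂P) :
    β₂ ^ 2 - β₁ * β₃ + β₁ * β₂ - β₁ ^ 3 =
        (β₂ - β₁ ^ 2) ^ 2 + β₁ * ∫ ω, (U ω - β₁) ^ 2 * (1 - U ω) ∂P ∧
      0 ≤ β₂ ^ 2 - β₁ * β₃ + β₁ * β₂ - β₁ ^ 3 := by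
  have hint : ∀ n : ℕ, Integrable (fun ω => U ω ^ n) P := by
    intro n
    refine (integrable_const (1 : ℝ)).mono' (hU.pow_const n).aestronglyMeasurable ?_
    filter_upwards [hb] with ω hω
    rw [Real.norm_eq_abs, abs_pow]
    exact pow_le_one₀ (abs_nonneg _) (abs_le.2 ⟨by linarith [hω.1], hω.2⟩)
  have h1' := hint 1
  simp only [pow_one] at h1'
  have key : (∫ ω, (U ω - β₁) ^ 2 * (1 - U ω) ∂P)
      = β₂ - β₁ ^ 2 - β₃ + 2 * β₁ * β₂ - β₁ ^ 3 := by
    have heq : ∀ ω, (U ω - β₁) ^ 2 * (1 - U ω)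
        = -(U ω ^ 3) + (1 + 2 * β₁) * U ω ^ 2 + (-2 * β₁ - β₁ ^ 2) * U ω + β₁ ^ 2 := by
      intro ω; ring
    rw [integral_congr_ae (Filter.Eventually.of_forall heq)]
    rw [integral_add, integral_add, integral_add, integral_neg, integral_const_mul,
      integral_const_mul, integral_const]
    · simp only [smul_eq_mul, measure_univ, probReal_univ, ENNReal.toReal_one, one_mul]
      rw [h1, h2, h3]; ring
    · exact (hint 3).neg
    · exact (hint 2).const_mul _
    · exact ((hint 3).neg.add ((hint 2).const_mul _))
    · exact h1'.const_mul _
    · exact (((hint 3).neg.add ((hint 2).const_mul _)).add (h1'.const_mul _))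
    · exact integrable_const _
  have hβ₁ : 0 ≤ β₁ := by
    rw [h1]
    refine integral_nonneg_of_ae ?_
    filter_upwards [hb] with ω hω using hω.1
  have hE : 0 ≤ ∫ ω, (U ω - β₁) ^ 2 * (1 - U ω) ∂P := by
    refine integral_nonneg_of_ae ?_
    filter_upwards [hb] with ω hω
    exact mul_nonneg (sq_nonneg _) (by linarith [hω.2])
  constructor
  · rw [key]; ring
  · nlinarith [sq_nonneg (β₂ - β₁ ^ 2), mul_nonneg hβ₁ hE, key]
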